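/- Let H be an ℓ-graph and let ε > 0. There exist N₀ and η > 0 such that if C is an ℓ-graph on N ≥ N₀ vertices containing at most η·N^{v(H)} copies of H, then e(C) ≤ (π(H) + ε)·C(N,ℓ). -/

import Mathlib

open Finset

/-- `C` (an ℓ-graph on `Fin N`, given by its edge set) contains a copy of the ℓ-graph `H`
with vertex type `α` and edge set `HE`. -/
def ContainsCopy {α : Type*} {N : ℕ} (HE : Finset (Finset α)) (C : Finset (Finset (Fin N))) :
    Prop :=
  ∃ f : α ↪ Fin N, ∀ e ∈ HE, e.map f ∈ C

/-- `ex(N, H)`: the maximum number of edges of an `H`-free ℓ-graph on `N` vertices. -/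
noncomputable def exNum {α : Type*} (ℓ : ℕ) (HE : Finset (Finset α)) (N : ℕ) : ℕ :=
  sSup {m : ℕ | ∃ C : Finset (Finset (Fin N)),
    (∀ e ∈ C, e.card = ℓ) ∧ ¬ ContainsCopy HE C ∧ C.card = m}

/-- The number of copies of `H` in `C`, counted as embeddings of the vertex set of `H`
into `Fin N` mapping each edge of `H` to an edge of `C`. -/
noncomputable def copyCount {α : Type*} (HE : Finset (Finset α)) {N : ℕ}
    (C : Finset (Finset (Fin N))) : ℕ :=
  Nat.card {f : α ↪ Fin N // ∀ e ∈ HE, e.map f ∈ C}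

lemma card_filter_superset {V : Type*} [Fintype V] [DecidableEq V] {e : Finset V} {k M : ℕ}
    (he : e.card = k) (hkM : k ≤ M) :
    (((univ : Finset V).powersetCard M).filter (fun S => e ⊆ S)).card
      = (Fintype.card V - k).choose (M - k) := by
  classical
  have hcompl : (eᶜ : Finset V).card = Fintype.card V - k := by rw [card_compl, he]
  rw [← hcompl, ← Finset.card_powersetCard]
  apply Finset.card_bij (fun S _ => S \ e)
  · intro S hS
    rw [mem_filter, mem_powersetCard] at hS
    obtain ⟨⟨-, hScard⟩, heS⟩ := hS
    rw [mem_powersetCard]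
    refine ⟨fun x hx => mem_compl.mpr (mem_sdiff.mp hx).2, ?_⟩
    rw [card_sdiff_of_subset heS, hScard, he]
  · intro S hS T hT h
    rw [mem_filter] at hS hT
    rw [← sdiff_union_of_subset hS.2, ← sdiff_union_of_subset hT.2, h]
  · intro T hT
    rw [mem_powersetCard] at hT
    obtain ⟨hTsub, hTcard⟩ := hT
    have hdisj : Disjoint T e := fun s hsT hse => by
      intro x hx
      exact absurd (mem_compl.mp (hTsub (hsT hx))) (not_not.mpr (hse hx))
    refine ⟨T ∪ e, ?_, ?_⟩
    · rw [mem_filter, mem_powersetCard]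
      refine ⟨⟨subset_univ _, ?_⟩, subset_union_right⟩
      rw [card_union_of_disjoint hdisj, hTcard, he, Nat.sub_add_cancel hkM]
    · rw [union_sdiff_cancel_right hdisj]


lemma dense_has_copy {α : Type*} [Fintype α] [DecidableEq α] {ℓ M N : ℕ}
    (HE : Finset (Finset α)) (C : Finset (Finset (Fin N))) (hC : ∀ e ∈ C, e.card = ℓ)
    {S : Finset (Fin N)} (hScard : S.card = M)
    (hdense : exNum ℓ HE M < (C.filter (· ⊆ S)).card) :
    ∃ g : α ↪ Fin N, (∀ e ∈ HE, e.map g ∈ C) ∧ (univ : Finset α).map g ⊆ S := by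
  classical
  let ψ0 : Fin M ≃ S := (finCongr hScard).symm.trans S.equivFin.symm
  let ψ : Fin M ↪ Fin N := ψ0.toEmbedding.trans (Function.Embedding.subtype _)
  have hψS : (univ : Finset (Fin M)).map ψ = S := by
    apply Finset.eq_of_subset_of_card_le
    · intro x hx
      obtain ⟨y, -, rfl⟩ := mem_map.mp hx
      exact (ψ0 y).2
    · rw [card_map, card_univ, Fintype.card_fin, hScard]
  set C' : Finset (Finset (Fin M)) := univ.filter (fun d => d.map ψ ∈ C) with hC'
  have hC'card : C'.card = (C.filter (· ⊆ S)).card := by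
    apply Finset.card_bij (fun d _ => d.map ψ)
    · intro d hd
      rw [mem_filter]
      refine ⟨(mem_filter.mp hd).2, ?_⟩
      calc d.map ψ ⊆ (univ : Finset (Fin M)).map ψ := map_subset_map.mpr (subset_univ d)
        _ = S := hψS
    · intro d _ d' _ h
      exact Finset.map_injective ψ h
    · intro c hc
      rw [mem_filter] at hc
      obtain ⟨hcC, hcS⟩ := hc
      refine ⟨c.preimage ψ ψ.injective.injOn, ?_, ?_⟩
      · rw [mem_filter]
        refine ⟨mem_univ _, ?_⟩
        have : (c.preimage ψ ψ.injective.injOn).map ψ = c := by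
          ext x
          simp only [mem_map, mem_preimage]
          constructor
          · rintro ⟨y, hy, rfl⟩; exact hy
          · intro hx
            have hxS : x ∈ S := hcS hx
            rw [← hψS] at hxS
            obtain ⟨y, -, rfl⟩ := mem_map.mp hxS
            exact ⟨y, hx, rfl⟩
        rw [this]; exact hcC
      · ext x
        simp only [mem_map, mem_preimage]
        constructor
        · rintro ⟨y, hy, rfl⟩; exact hy
        · intro hx
          have hxS : x ∈ S := hcS hx
          rw [← hψS] at hxS
          obtain ⟨y, -, rfl⟩ := mem_map.mp hxS
          exact ⟨y, hx, rfl⟩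
  have hcopy : ContainsCopy HE C' := by
    by_contra hnc
    have hmem : C'.card ∈ {m : ℕ | ∃ D : Finset (Finset (Fin M)),
        (∀ e ∈ D, e.card = ℓ) ∧ ¬ ContainsCopy HE D ∧ D.card = m} := by
      refine ⟨C', fun e he => ?_, hnc, rfl⟩
      have := (mem_filter.mp he).2
      rw [← card_map ψ (s := e)]
      exact hC (e.map ψ) this
    have hbdd : BddAbove {m : ℕ | ∃ D : Finset (Finset (Fin M)),
        (∀ e ∈ D, e.card = ℓ) ∧ ¬ ContainsCopy HE D ∧ D.card = m} := by
      refine ⟨Fintype.card (Finset (Fin M)), fun m hm => ?_⟩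
      obtain ⟨D, -, -, rfl⟩ := hm
      exact Finset.card_le_univ D
    have : C'.card ≤ exNum ℓ HE M := le_csSup hbdd hmem
    omega
  obtain ⟨f, hf⟩ := hcopy
  refine ⟨f.trans ψ, fun e he => ?_, ?_⟩
  · rw [← Finset.map_map]
    exact (mem_filter.mp (hf e he)).2
  · rw [← Finset.map_map]
    calc ((univ : Finset α).map f).map ψ ⊆ (univ : Finset (Fin M)).map ψ :=
          map_subset_map.mpr (subset_univ _)
      _ = S := hψS

/-- **Proposition (Erdős–Simonovits supersaturation).** Let `H` be an ℓ-graph with Turán density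
`π(H)` and let `ε > 0`. There exist `N₀` and `η > 0` such that every ℓ-graph `C` on `N ≥ N₀`
vertices containing at most `η·N^{v(H)}` copies of `H` satisfies
`e(C) ≤ (π(H)+ε)·C(N,ℓ)`. -/
theorem supersaturation {α : Type*} [Fintype α] [DecidableEq α] (ℓ : ℕ)
    (HE : Finset (Finset α)) (hH : ∀ e ∈ HE, e.card = ℓ)
    (π : ℝ)
    (hπ : Filter.Tendsto (fun N : ℕ => (exNum ℓ HE N : ℝ) / (N.choose ℓ : ℝ))
      Filter.atTop (nhds π))
    (ε : ℝ) (hε : 0 < ε) :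
    ∃ N₀ : ℕ, ∃ η : ℝ, 0 < η ∧ ∀ N ≥ N₀, ∀ C : Finset (Finset (Fin N)),
      (∀ e ∈ C, e.card = ℓ) →
      (copyCount HE C : ℝ) ≤ η * (N : ℝ) ^ (Fintype.card α) →
      (C.card : ℝ) ≤ (π + ε) * (N.choose ℓ : ℝ) := by
  classical
  set v := Fintype.card α with hv
  by_cases hπ1 : (1:ℝ) ≤ π + ε
  · refine ⟨0, 1, one_pos, fun N _ C hC _ => ?_⟩
    have h1 : C.card ≤ N.choose ℓ := by
      have hsub : C ⊆ (univ : Finset (Fin N)).powersetCard ℓ :=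
        fun c hc => mem_powersetCard.mpr ⟨subset_univ _, hC c hc⟩
      have h2 := card_le_card hsub
      rwa [card_powersetCard, card_univ, Fintype.card_fin] at h2
    calc (C.card : ℝ) ≤ (N.choose ℓ : ℝ) := by exact_mod_cast h1
      _ ≤ (π + ε) * (N.choose ℓ : ℝ) := le_mul_of_one_le_left (by positivity) hπ1
  push_neg at hπ1
  have hπ0 : 0 ≤ π := ge_of_tendsto hπ (Filter.Eventually.of_forall (fun n => by positivity))
  have hev : ∀ᶠ n in Filter.atTop, (exNum ℓ HE n : ℝ) / (n.choose ℓ : ℝ) < π + ε/2 :=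
    hπ.eventually_lt_const (by linarith)
  obtain ⟨M, hMex, hMge⟩ := (hev.and (Filter.eventually_ge_atTop (v + ℓ + 1))).exists
  have hℓM : ℓ ≤ M := by omega
  have hvM : v ≤ M := by omega
  have hcMℓ : (0:ℝ) < (M.choose ℓ : ℝ) := by exact_mod_cast Nat.choose_pos hℓM
  have hcMv : (0:ℝ) < (M.choose v : ℝ) := by exact_mod_cast Nat.choose_pos hvM
  have hvfac : (0:ℝ) < (v.factorial : ℝ) := by exact_mod_cast v.factorial_pos
  have hexM : (exNum ℓ HE M : ℝ) ≤ (π + ε/2) * (M.choose ℓ : ℝ) :=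
    le_of_lt ((div_lt_iff₀ hcMℓ).mp hMex)
  set η : ℝ := ε / (4 * 2^v * (v.factorial : ℝ) * (M.choose v : ℝ)) with hηdef
  have hηpos : 0 < η := by rw [hηdef]; positivity
  have hηeq : η * (4 * 2^v * (v.factorial : ℝ) * (M.choose v : ℝ)) = ε := by
    rw [hηdef]; field_simp
  refine ⟨M + 2*v, η, hηpos, ?_⟩
  intro N hN C hC hcopy
  by_contra hcon
  push_neg at hcon
  have hMN : M ≤ N := by omega
  have hℓN : ℓ ≤ N := hℓM.trans hMN
  have hvN : v ≤ N := hvM.trans hMN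
  have hNpos : 0 < N := by omega
  set 𝒮 := (univ : Finset (Fin N)).powersetCard M with h𝒮
  have h𝒮card : 𝒮.card = N.choose M := by
    rw [h𝒮, card_powersetCard, card_univ, Fintype.card_fin]
  -- Claim A: double counting
  have hsum : ∑ S ∈ 𝒮, (C.filter (· ⊆ S)).card = C.card * (N - ℓ).choose (M - ℓ) := by
    calc ∑ S ∈ 𝒮, (C.filter (· ⊆ S)).card
        = ∑ S ∈ 𝒮, ∑ c ∈ C, if c ⊆ S then 1 else 0 := by
          refine Finset.sum_congr rfl fun S _ => ?_
          rw [card_filter]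
      _ = ∑ c ∈ C, ∑ S ∈ 𝒮, if c ⊆ S then 1 else 0 := Finset.sum_comm
      _ = ∑ c ∈ C, (𝒮.filter (fun S => c ⊆ S)).card := by
          refine Finset.sum_congr rfl fun c _ => ?_
          rw [card_filter]
      _ = ∑ c ∈ C, (N - ℓ).choose (M - ℓ) := by
          refine Finset.sum_congr rfl fun c hc => ?_
          have h := card_filter_superset (V := Fin N) (hC c hc) hℓM
          rw [Fintype.card_fin] at h
          rw [h𝒮, h]
      _ = C.card * (N - ℓ).choose (M - ℓ) := by rw [sum_const, smul_eq_mul]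
  set D := 𝒮.filter (fun S => exNum ℓ HE M < (C.filter (· ⊆ S)).card) with hD
  set D2 := 𝒮.filter (fun S => ¬ exNum ℓ HE M < (C.filter (· ⊆ S)).card) with hD2
  have hDD2 : D.card + D2.card = 𝒮.card :=
    card_filter_add_card_filter_not _
  have hsplit : C.card * (N - ℓ).choose (M - ℓ)
      ≤ D.card * M.choose ℓ + D2.card * exNum ℓ HE M := by
    rw [← hsum, ← sum_filter_add_sum_filter_not 𝒮
      (fun S => exNum ℓ HE M < (C.filter (· ⊆ S)).card) (fun S => (C.filter (· ⊆ S)).card)]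
    refine Nat.add_le_add ?_ ?_
    · refine (Finset.sum_le_card_nsmul _ _ (M.choose ℓ) ?_).trans_eq (by rw [smul_eq_mul])
      intro S hS
      have hS𝒮 : S ∈ 𝒮 := (mem_filter.mp hS).1
      have hScard : S.card = M := (mem_powersetCard.mp hS𝒮).2
      have hsub : C.filter (· ⊆ S) ⊆ S.powersetCard ℓ := fun c hc =>
        mem_powersetCard.mpr ⟨(mem_filter.mp hc).2, hC c (mem_filter.mp hc).1⟩
      calc (C.filter (· ⊆ S)).card ≤ (S.powersetCard ℓ).card := card_le_card hsub
        _ = M.choose ℓ := by rw [card_powersetCard, hScard]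
    · refine (Finset.sum_le_card_nsmul _ _ (exNum ℓ HE M) ?_).trans_eq (by rw [smul_eq_mul])
      intro S hS
      exact Nat.le_of_not_lt (mem_filter.mp hS).2
  -- Claim C: copies cover dense sets
  set K := (univ : Finset (α ↪ Fin N)).filter (fun g => ∀ e ∈ HE, e.map g ∈ C) with hKdef
  have hDK : D.card ≤ K.card * (N - v).choose (M - v) := by
    have hsub : D ⊆ K.biUnion (fun g => 𝒮.filter (fun S => (univ : Finset α).map g ⊆ S)) := by
      intro S hS
      rw [hD, mem_filter] at hS
      obtain ⟨hS𝒮, hdense⟩ := hS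
      obtain ⟨g, hg1, hg2⟩ := dense_has_copy HE C hC (mem_powersetCard.mp hS𝒮).2 hdense
      exact mem_biUnion.mpr ⟨g, mem_filter.mpr ⟨mem_univ _, hg1⟩, mem_filter.mpr ⟨hS𝒮, hg2⟩⟩
    refine (card_le_card hsub).trans (card_biUnion_le_card_mul _ _ _ ?_)
    intro g _
    have hgcard : ((univ : Finset α).map g).card = v := by rw [card_map, card_univ]
    have h := card_filter_superset (V := Fin N) hgcard hvM
    rw [Fintype.card_fin] at h
    rw [h𝒮, h]
  have hKcopy : copyCount HE C = K.card := by
    rw [copyCount, Nat.card_eq_fintype_card, hKdef]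
    convert Fintype.card_subtype _
  clear_value K D D2 𝒮
  clear hD hD2 hKdef h𝒮 hsum
  -- real arithmetic
  set X : ℝ := ((N - ℓ).choose (M - ℓ) : ℝ) with hXdef
  have hX : (0:ℝ) < X := by
    rw [hXdef]; exact_mod_cast Nat.choose_pos (Nat.sub_le_sub_right hMN ℓ)
  set Y : ℝ := ((N - v).choose (M - v) : ℝ) with hYdef
  have hY : (0:ℝ) < Y := by
    rw [hYdef]; exact_mod_cast Nat.choose_pos (Nat.sub_le_sub_right hMN v)
  have hid1 : (N.choose M : ℝ) * (M.choose ℓ : ℝ) = (N.choose ℓ : ℝ) * X := by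
    rw [hXdef]; exact_mod_cast congrArg Nat.cast (Nat.choose_mul (n := N) hℓM)
  have hid2 : (N.choose M : ℝ) * (M.choose v : ℝ) = (N.choose v : ℝ) * Y := by
    rw [hYdef]; exact_mod_cast congrArg Nat.cast (Nat.choose_mul (n := N) hvM)
  have htu : (D.card : ℝ) + (D2.card : ℝ) = (N.choose M : ℝ) := by
    rw [← h𝒮card]; exact_mod_cast hDD2
  have hsplitR : (C.card : ℝ) * X
      ≤ (D.card : ℝ) * (M.choose ℓ : ℝ) + (D2.card : ℝ) * (exNum ℓ HE M : ℝ) := by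
    rw [hXdef]; exact_mod_cast hsplit
  have hstep1 : (π + ε) * ((N.choose M : ℝ) * (M.choose ℓ : ℝ))
      < (D.card : ℝ) * (M.choose ℓ : ℝ) + (D2.card : ℝ) * ((π + ε/2) * (M.choose ℓ : ℝ)) := by
    calc (π + ε) * ((N.choose M : ℝ) * (M.choose ℓ : ℝ))
        = ((π + ε) * (N.choose ℓ : ℝ)) * X := by rw [hid1]; ring
      _ < (C.card : ℝ) * X := by
          exact mul_lt_mul_of_pos_right hcon hX
      _ ≤ (D.card : ℝ) * (M.choose ℓ : ℝ) + (D2.card : ℝ) * (exNum ℓ HE M : ℝ) := hsplitR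
      _ ≤ _ := by
          have := mul_le_mul_of_nonneg_left hexM (by positivity : (0:ℝ) ≤ (D2.card : ℝ))
          linarith
  have hstep2 : (π + ε) * (N.choose M : ℝ)
      < (D.card : ℝ) + (D2.card : ℝ) * (π + ε/2) := by
    have h := hstep1
    have h2 : ((π + ε) * (N.choose M : ℝ)) * (M.choose ℓ : ℝ)
        < ((D.card : ℝ) + (D2.card : ℝ) * (π + ε/2)) * (M.choose ℓ : ℝ) := by
      ring_nf at h ⊢; linarith
    exact lt_of_mul_lt_mul_right h2 (le_of_lt hcMℓ)
  have ht : (ε/2) * (N.choose M : ℝ) < (D.card : ℝ) := by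
    have htpos : (0:ℝ) ≤ (D.card : ℝ) := by positivity
    have hupos : (0:ℝ) ≤ (D2.card : ℝ) := by positivity
    have hπeq : (D.card : ℝ) * π + (D2.card : ℝ) * π = (N.choose M : ℝ) * π := by
      rw [← htu]; ring
    have htπ : (0:ℝ) ≤ (D.card : ℝ) * π := mul_nonneg htpos hπ0
    have huε : (D2.card : ℝ) * ε ≤ (N.choose M : ℝ) * ε := by
      have h5 : (D2.card : ℝ) ≤ (N.choose M : ℝ) := by linarith
      exact mul_le_mul_of_nonneg_right h5 (le_of_lt hε)
    nlinarith only [hstep2, hπeq, htπ, huε, htpos, hε]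
  have hDKR : (D.card : ℝ) ≤ (K.card : ℝ) * Y := by
    rw [hYdef]; exact_mod_cast hDK
  have hKR : (K.card : ℝ) ≤ η * (N:ℝ)^v := by
    rw [← hKcopy]; exact hcopy
  have hA : (ε/2) * (N.choose M : ℝ) < η * (N:ℝ)^v * Y :=
    ht.trans_le (hDKR.trans (mul_le_mul_of_nonneg_right hKR (le_of_lt hY)))
  have hB : (ε/2) * (N.choose v : ℝ) < η * (N:ℝ)^v * (M.choose v : ℝ) := by
    have h2 : ((ε/2) * (N.choose v : ℝ)) * Y
        < (η * (N:ℝ)^v * (M.choose v : ℝ)) * Y := by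
      have h3 := mul_lt_mul_of_pos_right hA hcMv
      calc ((ε/2) * (N.choose v : ℝ)) * Y = (ε/2) * ((N.choose M : ℝ) * (M.choose v : ℝ)) := by
            rw [hid2]; ring
        _ < (η * (N:ℝ)^v * Y) * (M.choose v : ℝ) := by linarith [h3]
        _ = (η * (N:ℝ)^v * (M.choose v : ℝ)) * Y := by ring
    exact lt_of_mul_lt_mul_right h2 (le_of_lt hY)
  have hlow : ((N + 1 - v : ℕ) : ℝ)^v ≤ (v.factorial : ℝ) * (N.choose v : ℝ) := by
    have h := Nat.pow_sub_le_descFactorial N v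
    rw [Nat.descFactorial_eq_factorial_mul_choose] at h
    exact_mod_cast h
  have hNb : (N:ℝ) ≤ 2 * ((N + 1 - v : ℕ) : ℝ) := by
    have h : N ≤ 2 * (N + 1 - v) := by omega
    exact_mod_cast h
  have hpow : (N:ℝ)^v ≤ 2^v * ((N + 1 - v : ℕ) : ℝ)^v := by
    calc (N:ℝ)^v ≤ (2 * ((N + 1 - v : ℕ) : ℝ))^v :=
          pow_le_pow_left₀ (by positivity) hNb v
      _ = 2^v * ((N + 1 - v : ℕ) : ℝ)^v := mul_pow _ _ _
  have hNvpos : (0:ℝ) < (N:ℝ)^v := by positivity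
  have h2vpos : (0:ℝ) < (2:ℝ)^v := by positivity
  have hfinal : (ε/2) * (N:ℝ)^v < (ε/4) * (N:ℝ)^v := by
    calc (ε/2) * (N:ℝ)^v ≤ (ε/2) * (2^v * ((N + 1 - v : ℕ) : ℝ)^v) :=
          mul_le_mul_of_nonneg_left hpow (by linarith)
      _ ≤ (ε/2) * (2^v * ((v.factorial : ℝ) * (N.choose v : ℝ))) :=
          mul_le_mul_of_nonneg_left
            (mul_le_mul_of_nonneg_left hlow (le_of_lt h2vpos)) (by linarith)
      _ = ((ε/2) * (N.choose v : ℝ)) * ((2:ℝ)^v * (v.factorial : ℝ)) := by ring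
      _ < (η * (N:ℝ)^v * (M.choose v : ℝ)) * ((2:ℝ)^v * (v.factorial : ℝ)) :=
          mul_lt_mul_of_pos_right hB (by positivity)
      _ = (η * (4 * 2^v * (v.factorial : ℝ) * (M.choose v : ℝ))) * ((N:ℝ)^v / 4) := by ring
      _ = (ε/4) * (N:ℝ)^v := by rw [hηeq]; ring
  linarith only [hfinal, mul_pos hε hNvpos]
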